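/- Let p ∈ (1,∞), s₀ > 0, and β < 0. Then there exists a unique x > 0 solving (x/|β|^{p'})·(1 - cosh_p(x^{1/p}s₀)^{-p}) = 1, where p' = p/(p-1). -/
import Mathlib


open Real MeasureTheory

theorem exists_unique_negative_eigenvalue_eq (p : ℝ) (hp : 1 < p)
    (s₀ β : ℝ) (hs₀ : 0 < s₀) (hβ : β < 0)
    (p' : ℝ) (hp' : p' = p / (p - 1))
    (arccoshp : ℝ → ℝ)
    (harccosh : ∀ x, 1 ≤ x → arccoshp x = ∫ t in (1:ℝ)..x, (t ^ p - 1) ^ (-(1/p)))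
    (coshp : ℝ → ℝ)
    (hcosh : ∀ t, 0 ≤ t → 1 ≤ coshp t ∧ arccoshp (coshp t) = t) :
    ∃! x : ℝ, 0 < x ∧ (x / |β| ^ p') * (1 - (coshp (x ^ (1/p) * s₀)) ^ (-p)) = 1 := by
  have hp0 : (0:ℝ) < p := lt_trans one_pos hp
  have hpne : p ≠ 0 := ne_of_gt hp0
  set f : ℝ → ℝ := fun t => (t ^ p - 1) ^ (-(1/p)) with hf_def
  set F : ℝ → ℝ := fun x => ∫ t in (1:ℝ)..x, f t with hF_def
  -- integrability
  have hexp : (-1:ℝ) < -(1/p) := by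
    have : 1/p < 1 := by
      rw [div_lt_one hp0]; exact hp
    linarith
  have hinv : (0:ℝ) < 1/p := by positivity
  have hfcont : ∀ t : ℝ, 1 < t → ContinuousAt f t := by
    intro t ht
    have h1 : ContinuousAt (fun x : ℝ => x ^ p - 1) t :=
      (Real.continuousAt_rpow_const t p (Or.inr hp0.le)).sub continuousAt_const
    have hne : t ^ p - 1 ≠ 0 := by
      have : 1 < t ^ p := (Real.one_lt_rpow_iff_of_pos (by linarith)).2 (Or.inl ⟨ht, hp0⟩)
      linarith
    exact h1.rpow_const (Or.inl hne)
  have hfi : ∀ b, 1 ≤ b → IntervalIntegrable f volume 1 b := by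
    intro b hb
    have hg : IntervalIntegrable (fun t : ℝ => (t - 1) ^ (-(1/p))) volume 1 b := by
      have := (intervalIntegral.intervalIntegrable_rpow' (a := 0) (b := b - 1) hexp).comp_sub_right 1
      simpa using this
    have hcOn : ContinuousOn f (Set.uIoc 1 b) := by
      rw [Set.uIoc_of_le hb]
      intro t ht
      exact (hfcont t ht.1).continuousWithinAt
    refine hg.mono_fun' (hcOn.aestronglyMeasurable measurableSet_uIoc) ?_
    refine (MeasureTheory.ae_restrict_iff' measurableSet_uIoc).2 (Filter.Eventually.of_forall ?_)
    intro t ht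
    rw [Set.uIoc_of_le hb] at ht
    have ht1 : 1 < t := ht.1
    have h1 : t - 1 ≤ t ^ p - 1 := by
      have : t ^ (1:ℝ) ≤ t ^ p := Real.rpow_le_rpow_of_exponent_le ht1.le hp.le
      rw [Real.rpow_one] at this
      linarith
    have h2 : f t ≤ (t - 1) ^ (-(1/p)) :=
      Real.rpow_le_rpow_of_nonpos (by linarith) h1 (by linarith)
    have h3 : 0 ≤ f t := Real.rpow_nonneg (by nlinarith) _
    simpa [Real.norm_eq_abs, abs_of_nonneg h3] using h2
  have hfi' : ∀ a b, 1 ≤ a → a ≤ b → IntervalIntegrable f volume a b := by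
    intro a b ha hab
    exact (hfi b (le_trans ha hab)).mono_set'
      (Set.uIoc_subset_uIoc_of_uIcc_subset_uIcc
        (by rw [Set.uIcc_of_le hab, Set.uIcc_of_le (le_trans ha hab)]
            exact Set.Icc_subset_Icc ha le_rfl))
  have hF1 : F 1 = 0 := intervalIntegral.integral_same
  -- strict monotonicity of F on [1,∞)
  have hFmono : StrictMonoOn F (Set.Ici 1) := by
    intro a ha b hb hab
    have hInt : 0 < ∫ t in a..b, f t := by
      refine intervalIntegral.intervalIntegral_pos_of_pos_on (hfi' a b ha hab.le) ?_ hab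
      intro x hx
      have hx1 : 1 < x := lt_of_le_of_lt ha hx.1
      have : 1 < x ^ p := (Real.one_lt_rpow_iff_of_pos (by linarith)).2 (Or.inl ⟨hx1, hp0⟩)
      exact Real.rpow_pos_of_pos (by linarith) _
    have hadd : F a + ∫ t in a..b, f t = F b :=
      intervalIntegral.integral_add_adjacent_intervals (hfi a ha) (hfi' a b ha hab.le)
    linarith
  have harcF : ∀ x, 1 ≤ x → arccoshp x = F x := fun x hx => harccosh x hx
  have harc1 : arccoshp 1 = 0 := by rw [harcF 1 le_rfl, hF1]
  -- coshp facts
  have hcosh_ge : ∀ t, 0 ≤ t → 1 ≤ coshp t := fun t ht => (hcosh t ht).1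
  have hcosh_arc : ∀ t, 0 ≤ t → arccoshp (coshp t) = t := fun t ht => (hcosh t ht).2
  have hcosh_gt : ∀ t, 0 < t → 1 < coshp t := by
    intro t ht
    rcases eq_or_lt_of_le (hcosh_ge t ht.le) with h | h
    · exfalso
      have := hcosh_arc t ht.le
      rw [← h, harc1] at this
      linarith
    · exact h
  have hFcosh : ∀ t, 0 ≤ t → F (coshp t) = t := by
    intro t ht
    rw [← harcF _ (hcosh_ge t ht), hcosh_arc t ht]
  have hcosh_mono : ∀ t₁ t₂, 0 ≤ t₁ → t₁ ≤ t₂ → coshp t₁ ≤ coshp t₂ := by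
    intro t₁ t₂ ht₁ h12
    by_contra hc
    push_neg at hc
    have := hFmono (Set.mem_Ici.2 (hcosh_ge t₂ (le_trans ht₁ h12)))
      (Set.mem_Ici.2 (hcosh_ge t₁ ht₁)) hc
    rw [hFcosh t₂ (le_trans ht₁ h12), hFcosh t₁ ht₁] at this
    linarith
  -- constants
  set B : ℝ := |β| ^ p' with hB_def
  have hB : 0 < B := Real.rpow_pos_of_pos (abs_pos.2 (ne_of_lt hβ)) _
  set c : ℝ := s₀ ^ p * B with hc_def
  have hs₀p : 0 < s₀ ^ p := Real.rpow_pos_of_pos hs₀ _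
  have hc : 0 < c := mul_pos hs₀p hB
  -- the equation is equivalent to x * h = B
  have heq_iff : ∀ x h : ℝ, ((x / B) * h = 1 ↔ x * h = B) := by
    intro x h
    rw [div_mul_eq_mul_div, div_eq_one_iff_eq (ne_of_gt hB)]
  -- monotonicity of Φ
  have hPhi : ∀ x₁ x₂, 0 < x₁ → x₁ < x₂ →
      x₁ * (1 - (coshp (x₁ ^ (1/p) * s₀)) ^ (-p)) < x₂ * (1 - (coshp (x₂ ^ (1/p) * s₀)) ^ (-p)) := by
    intro x₁ x₂ hx₁ h12
    have ht₁ : 0 < x₁ ^ (1/p) * s₀ := mul_pos (Real.rpow_pos_of_pos hx₁ _) hs₀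
    have ht12 : x₁ ^ (1/p) * s₀ ≤ x₂ ^ (1/p) * s₀ := by
      have := Real.rpow_le_rpow hx₁.le h12.le (by positivity : (0:ℝ) ≤ 1/p)
      exact mul_le_mul_of_nonneg_right this hs₀.le
    set y₁ := coshp (x₁ ^ (1/p) * s₀)
    set y₂ := coshp (x₂ ^ (1/p) * s₀)
    have hy₁ : 1 < y₁ := hcosh_gt _ ht₁
    have hy12 : y₁ ≤ y₂ := hcosh_mono _ _ ht₁.le ht12
    have hh₁ : 0 < 1 - y₁ ^ (-p) := by
      have := Real.rpow_lt_one_of_one_lt_of_neg hy₁ (by linarith : -p < 0)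
      linarith
    have hh12 : 1 - y₁ ^ (-p) ≤ 1 - y₂ ^ (-p) := by
      have := Real.rpow_le_rpow_of_nonpos (by linarith : (0:ℝ) < y₁) hy12 (by linarith : -p ≤ 0)
      linarith
    exact mul_lt_mul h12 hh12 hh₁ (by linarith)
  -- existence
  set d : ℝ := 1 - (coshp 1) ^ (-p) with hd_def
  have hd : 0 < d := by
    have h1 := hcosh_gt 1 one_pos
    have := Real.rpow_lt_one_of_one_lt_of_neg h1 (by linarith : -p < 0)
    simp only [hd_def]; linarith
  set T : ℝ := 1 + (c/d) ^ (1/p) with hT_def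
  have hcd : 0 < c / d := div_pos hc hd
  have hT1 : 1 ≤ T := by
    have : 0 ≤ (c/d) ^ (1/p) := Real.rpow_nonneg hcd.le _
    simp only [hT_def]; linarith
  have hT0 : 0 < T := lt_of_lt_of_le one_pos hT1
  have hTp : c ≤ T ^ p * d := by
    have h1 : (c/d) ^ (1/p) ≤ T := by simp only [hT_def]; linarith
    have h2 : ((c/d) ^ (1/p)) ^ p ≤ T ^ p :=
      Real.rpow_le_rpow (Real.rpow_nonneg hcd.le _) h1 hp0.le
    have h3 : ((c/d) ^ (1/p)) ^ p = c / d := by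
      rw [← Real.rpow_mul hcd.le, one_div_mul_cancel hpne, Real.rpow_one]
    rw [h3] at h2
    calc c = c / d * d := (div_mul_cancel₀ c (ne_of_gt hd)).symm
    _ ≤ T ^ p * d := mul_le_mul_of_nonneg_right h2 hd.le
  set Y : ℝ := coshp T with hY_def
  have hY1 : 1 ≤ Y := hcosh_ge T (by linarith)
  have hYc1 : coshp 1 ≤ Y := hcosh_mono 1 T (by norm_num) hT1
  have hFY : F Y = T := hFcosh T (by linarith)
  set G : ℝ → ℝ := fun y => F y ^ p * (1 - y ^ (-p)) with hG_def
  have hG1 : G 1 = 0 := by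
    simp only [hG_def, hF1, Real.zero_rpow hpne, zero_mul]
  have hGY : c ≤ G Y := by
    have hY' : 1 - (coshp 1) ^ (-p) ≤ 1 - Y ^ (-p) := by
      have := Real.rpow_le_rpow_of_nonpos
        (lt_of_lt_of_le one_pos (hcosh_ge 1 one_pos.le)) hYc1 (by linarith : -p ≤ 0)
      linarith
    have hTpnn : 0 ≤ T ^ p := Real.rpow_nonneg hT0.le _
    calc c ≤ T ^ p * d := hTp
    _ ≤ T ^ p * (1 - Y ^ (-p)) := mul_le_mul_of_nonneg_left hY' hTpnn
    _ = G Y := by rw [hG_def]; simp only [hFY]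
  have hFcont : ContinuousOn F (Set.Icc 1 Y) := by
    have := intervalIntegral.continuousOn_primitive_interval' (hfi Y hY1)
      (Set.left_mem_uIcc)
    rwa [Set.uIcc_of_le hY1] at this
  have hGcont : ContinuousOn G (Set.Icc 1 Y) := by
    apply ContinuousOn.mul
    · exact hFcont.rpow_const (fun x hx => Or.inr hp0.le)
    · apply ContinuousOn.sub continuousOn_const
      exact continuousOn_id.rpow_const (fun x hx => Or.inl (by
        have : (1:ℝ) ≤ x := hx.1
        simp only [id]
        linarith))
  have hmem : c ∈ Set.Icc (G 1) (G Y) := by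
    rw [hG1]; exact ⟨hc.le, hGY⟩
  obtain ⟨y₀, hy₀mem, hGy₀⟩ := intermediate_value_Icc hY1 hGcont hmem
  have hy₀1 : 1 < y₀ := by
    rcases eq_or_lt_of_le hy₀mem.1 with h | h
    · exfalso; rw [← h, hG1] at hGy₀; linarith
    · exact h
  set a : ℝ := F y₀ with ha_def
  have ha0 : 0 < a := by
    have := hFmono (Set.mem_Ici.2 le_rfl) (Set.mem_Ici.2 hy₀1.le) hy₀1
    rw [hF1] at this; exact this
  set x₀ : ℝ := (a / s₀) ^ p with hx₀_def
  have hads : 0 < a / s₀ := div_pos ha0 hs₀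
  have hx₀pos : 0 < x₀ := Real.rpow_pos_of_pos hads _
  have hkey : x₀ ^ (1/p) * s₀ = a := by
    rw [hx₀_def, ← Real.rpow_mul hads.le, mul_one_div_cancel hpne, Real.rpow_one,
      div_mul_cancel₀ a (ne_of_gt hs₀)]
  have hca : coshp a = y₀ := by
    have h1 : F (coshp a) = F y₀ := by rw [hFcosh a ha0.le]
    exact hFmono.injOn (Set.mem_Ici.2 (hcosh_ge a ha0.le)) (Set.mem_Ici.2 hy₀1.le) h1
  have hx₀eq : (x₀ / B) * (1 - (coshp (x₀ ^ (1/p) * s₀)) ^ (-p)) = 1 := by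
    rw [heq_iff, hkey, hca]
    have hx₀' : x₀ = a ^ p / s₀ ^ p := Real.div_rpow ha0.le hs₀.le p
    have hGy₀' : a ^ p * (1 - y₀ ^ (-p)) = c := hGy₀
    rw [hx₀', div_mul_eq_mul_div, hGy₀', hc_def]
    field_simp
  refine ⟨x₀, ⟨hx₀pos, hx₀eq⟩, ?_⟩
  rintro x ⟨hxpos, hxeq⟩
  rw [heq_iff] at hxeq hx₀eq
  rcases lt_trichotomy x x₀ with h | h | h
  · exfalso; have := hPhi x x₀ hxpos h; rw [hxeq, hx₀eq] at this; linarith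
  · exact h
  · exfalso; have := hPhi x₀ x hx₀pos h; rw [hxeq, hx₀eq] at this; linarith
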